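/- (Lemma 3.1, matrix-family form.) Let U ⊆ ℝ^d be open and A : U → Matrix (Fin m) (Fin m) ℂ a C^∞ map. Say that A has constant algebraic type near p ∈ U if there exist an open neighborhood V ⊆ U of p, an s ∈ ℕ, C^∞ functions λ₁,…,λ_s : V → ℂ with λ_i(x) ≠ λ_j(x) for all i ≠ j and all x ∈ V, and natural numbers b₁,…,b_s and d_{k,j} (1 ≤ k ≤ s, 1 ≤ j ≤ m) such that for every x ∈ V the characteristic polynomial of A(x) equals ∏_{k=1}^{s} (X − λ_k(x))^{b_k} and rank((A(x) − λ_k(x)·1)^j) = d_{k,j} for all k and j. Then the set B_A of points near which A has constant algebraic type is open and dense in U. -/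

import Mathlib

open Matrix Polynomial

/-- `A` has constant algebraic type near `p`: on some open neighborhood `V ⊆ U` of `p` there
are smooth, pairwise distinct eigenvalue functions `λ₁,…,λ_s` and constants `b_k`, `d_{k,j}`
such that the characteristic polynomial of `A(x)` is `∏ (X − λ_k(x))^{b_k}` and
`rank((A(x) − λ_k(x)·1)^j) = d_{k,j}` throughout `V`. -/
def HasConstAlgType {d m : ℕ} (A : (Fin d → ℝ) → Matrix (Fin m) (Fin m) ℂ)
    (U : Set (Fin d → ℝ)) (p : Fin d → ℝ) : Prop :=
  ∃ V : Set (Fin d → ℝ), IsOpen V ∧ p ∈ V ∧ V ⊆ U ∧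
    ∃ (s : ℕ) (lam : Fin s → (Fin d → ℝ) → ℂ) (b : Fin s → ℕ) (dd : Fin s → Fin m → ℕ),
      (∀ k, ContDiffOn ℝ (⊤ : ℕ∞) (lam k) V) ∧
      (∀ x ∈ V, ∀ k k' : Fin s, k ≠ k' → lam k x ≠ lam k' x) ∧
      (∀ x ∈ V, (A x).charpoly = ∏ k, (X - C (lam k x)) ^ (b k)) ∧
      (∀ x ∈ V, ∀ (k : Fin s) (j : Fin m),
        ((A x - lam k x • (1 : Matrix (Fin m) (Fin m) ℂ)) ^ ((j : ℕ) + 1)).rank = dd k j)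

namespace L31

variable {d m : ℕ}

lemma contDiffOn_det {N : ℕ} {M : (Fin d → ℝ) → Matrix (Fin N) (Fin N) ℂ} {U : Set (Fin d → ℝ)}
    (h : ∀ i j, ContDiffOn ℝ (⊤:ℕ∞) (fun x => M x i j) U) :
    ContDiffOn ℝ (⊤:ℕ∞) (fun x => (M x).det) U := by
  have e : (fun x => (M x).det)
      = fun x => ∑ σ : Equiv.Perm (Fin N), ((Equiv.Perm.sign σ : ℤ) : ℂ) * ∏ i, M x (σ i) i := by
    funext x; rw [Matrix.det_apply']
  rw [e]
  apply ContDiffOn.sum; intro σ _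
  exact contDiffOn_const.mul (contDiffOn_prod fun i _ => h (σ i) i)

lemma eval_charpoly (M : Matrix (Fin m) (Fin m) ℂ) (z : ℂ) :
    (M.charpoly).eval z = (Matrix.of (fun i j => (if i = j then z else 0) - M i j)).det := by
  rw [Matrix.charpoly, ← Polynomial.coe_evalRingHom, RingHom.map_det]
  congr 1; ext i j
  by_cases hij : i = j
  · subst hij; simp [Matrix.charmatrix_apply_eq]
  · simp [Matrix.charmatrix_apply_ne _ _ _ hij, hij]

lemma contDiffOn_eval_charpoly {A : (Fin d → ℝ) → Matrix (Fin m) (Fin m) ℂ} {U : Set (Fin d → ℝ)}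
    (hA : ∀ i j, ContDiffOn ℝ (⊤:ℕ∞) (fun x => A x i j) U) (z : ℂ) :
    ContDiffOn ℝ (⊤:ℕ∞) (fun x => ((A x).charpoly).eval z) U := by
  have e : (fun x => ((A x).charpoly).eval z)
      = fun x => (Matrix.of (fun i j => (if i = j then z else 0) - A x i j)).det := by
    funext x; exact eval_charpoly _ z
  rw [e]
  exact contDiffOn_det (fun i j => contDiffOn_const.sub (hA i j))

lemma charpoly_natDegree (M : Matrix (Fin m) (Fin m) ℂ) : M.charpoly.natDegree = m := by
  simp [Matrix.charpoly_natDegree_eq_dim]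

lemma contDiffOn_charpoly_coeff {A : (Fin d → ℝ) → Matrix (Fin m) (Fin m) ℂ} {U : Set (Fin d → ℝ)}
    (hA : ∀ i j, ContDiffOn ℝ (⊤:ℕ∞) (fun x => A x i j) U) (t : ℕ) :
    ContDiffOn ℝ (⊤:ℕ∞) (fun x => ((A x).charpoly).coeff t) U := by
  classical
  set v : Fin (m+1) → ℂ := fun i => (i : ℂ) with hv
  have hinj : Set.InjOn v (Finset.univ : Finset (Fin (m+1))) := by
    intro a _ b _ hab
    have : ((a : ℕ) : ℂ) = ((b : ℕ) : ℂ) := hab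
    exact Fin.ext (Nat.cast_injective this)
  have e : (fun x => ((A x).charpoly).coeff t)
      = fun x => ∑ i : Fin (m+1), ((A x).charpoly).eval (v i) * ((Lagrange.basis Finset.univ v i).coeff t) := by
    funext x
    have hdeg : ((A x).charpoly).degree < (Finset.univ : Finset (Fin (m+1))).card := by
      have h1 : ((A x).charpoly).degree ≤ (m : ℕ) := by
        have h0 := Polynomial.degree_le_natDegree (p := (A x).charpoly)
        rwa [charpoly_natDegree (A x)] at h0
      refine lt_of_le_of_lt h1 ?_
      simp [Finset.card_univ]
      exact_mod_cast Nat.lt_succ_self m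
    have h2 := Lagrange.eq_interpolate hinj hdeg
    conv_lhs => rw [h2]
    rw [Lagrange.interpolate_apply, Polynomial.finset_sum_coeff]
    refine Finset.sum_congr rfl fun i _ => ?_
    rw [Polynomial.coeff_C_mul]
  rw [e]
  exact ContDiffOn.sum fun i _ => (contDiffOn_eval_charpoly hA (v i)).mul contDiffOn_const





noncomputable def psums (A : (Fin d → ℝ) → Matrix (Fin m) (Fin m) ℂ) (j : ℕ)
    (x : Fin d → ℝ) : ℂ := (((A x).charpoly.roots).map (· ^ j)).sum

noncomputable def esm (A : (Fin d → ℝ) → Matrix (Fin m) (Fin m) ℂ) (a : ℕ)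
    (x : Fin d → ℝ) : ℂ := ((A x).charpoly.roots).esymm a

lemma charpoly_splits (M : Matrix (Fin m) (Fin m) ℂ) :
    Splits M.charpoly := IsAlgClosed.splits _

lemma card_roots_charpoly (M : Matrix (Fin m) (Fin m) ℂ) :
    Multiset.card M.charpoly.roots = m := by
  rw [Polynomial.splits_iff_card_roots.mp (charpoly_splits M)]
  simp [Matrix.charpoly_natDegree_eq_dim]

lemma charpoly_eq_prod_roots (M : Matrix (Fin m) (Fin m) ℂ) :
    M.charpoly = (Multiset.map (fun a => X - C a) M.charpoly.roots).prod :=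
  (charpoly_splits M).eq_prod_roots_of_monic (Matrix.charpoly_monic M)

lemma esm_eq_coeff (A : (Fin d → ℝ) → Matrix (Fin m) (Fin m) ℂ) (x : Fin d → ℝ)
    {a : ℕ} (ha : a ≤ m) :
    esm A a x = (-1)^a * ((A x).charpoly.coeff (m - a)) := by
  have hcard := card_roots_charpoly (A x)
  have h := Multiset.prod_X_sub_C_coeff ((A x).charpoly.roots)
    (k := m - a) (by rw [hcard]; omega)
  rw [← charpoly_eq_prod_roots] at h
  rw [hcard] at h
  have hma : m - (m - a) = a := by omega
  rw [hma] at h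
  rw [h, ← mul_assoc, ← pow_add]
  have : (a + a) = 2 * a := by omega
  rw [this, pow_mul]
  simp [esm]

lemma esm_eq_zero (A : (Fin d → ℝ) → Matrix (Fin m) (Fin m) ℂ) (x : Fin d → ℝ)
    {a : ℕ} (ha : m < a) : esm A a x = 0 := by
  unfold esm Multiset.esymm
  rw [Multiset.powersetCard_eq_empty _ (by rw [card_roots_charpoly]; exact ha)]
  simp

lemma contDiffOn_esm {A : (Fin d → ℝ) → Matrix (Fin m) (Fin m) ℂ} {U : Set (Fin d → ℝ)}
    (hA : ∀ i j, ContDiffOn ℝ (⊤:ℕ∞) (fun x => A x i j) U) (a : ℕ) :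
    ContDiffOn ℝ (⊤:ℕ∞) (esm A a) U := by
  rcases le_or_gt a m with ha | ha
  · have e : esm A a = fun x => (-1:ℂ)^a * ((A x).charpoly.coeff (m - a)) := by
      funext x; exact esm_eq_coeff A x ha
    rw [e]
    exact contDiffOn_const.mul (contDiffOn_charpoly_coeff hA _)
  · have e : esm A a = fun _ => (0:ℂ) := by funext x; exact esm_eq_zero A x ha
    rw [e]; exact contDiffOn_const

lemma psums_newton (A : (Fin d → ℝ) → Matrix (Fin m) (Fin m) ℂ) (x : Fin d → ℝ)
    {k : ℕ} (hk : 0 < k) :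
    psums A k x = (-1)^(k+1) * k * esm A k x -
      ∑ a ∈ (Finset.HasAntidiagonal.antidiagonal k).filter (fun a => a.1 ∈ Set.Ioo 0 k),
        (-1)^a.1 * esm A a.1 x * psums A a.2 x := by
  classical
  set l : List ℂ := (A x).charpoly.roots.toList with hl
  have hco : (l : Multiset ℂ) = (A x).charpoly.roots := Multiset.coe_toList _
  set r : Fin l.length → ℂ := l.get with hr
  have key : Multiset.map r (Finset.univ.val) = (A x).charpoly.roots := by
    rw [← hco]
    have : (Finset.univ.val : Multiset (Fin l.length)) = (List.finRange l.length : List (Fin l.length)) := by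
      simp [Finset.univ, Fintype.elems]
    rw [this]
    rw [Multiset.map_coe]
    rw [List.map_get_finRange]
  have hpsum : ∀ j : ℕ, psums A j x = ∑ i, r i ^ j := by
    intro j
    rw [psums, ← key, Multiset.map_map]
    rfl
  have hesm : ∀ j : ℕ, esm A j x = (Multiset.map r Finset.univ.val).esymm j := by
    intro j; rw [esm, ← key]
  have main := congrArg (MvPolynomial.aeval r)
    (MvPolynomial.psum_eq_mul_esymm_sub_sum (Fin l.length) ℂ k hk)
  simp only [map_sub, _root_.map_mul, map_pow, _root_.map_neg, _root_.map_one, map_natCast, map_sum,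
    MvPolynomial.aeval_esymm_eq_multiset_esymm, MvPolynomial.psum, MvPolynomial.aeval_X] at main
  simp only [hpsum, hesm]
  exact main

lemma contDiffOn_psums {A : (Fin d → ℝ) → Matrix (Fin m) (Fin m) ℂ} {U : Set (Fin d → ℝ)}
    (hA : ∀ i j, ContDiffOn ℝ (⊤:ℕ∞) (fun x => A x i j) U) (j : ℕ) :
    ContDiffOn ℝ (⊤:ℕ∞) (psums A j) U := by
  induction j using Nat.strong_induction_on with
  | _ j ih =>
    rcases Nat.eq_zero_or_pos j with hj | hj
    · subst hj
      have e : psums A 0 = fun _ => (m : ℂ) := by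
        funext x
        simp only [psums, pow_zero]
        rw [Multiset.map_const', Multiset.sum_replicate, card_roots_charpoly]
        simp
      rw [e]; exact contDiffOn_const
    · have e : psums A j = fun x => (-1:ℂ)^(j+1) * j * esm A j x -
        ∑ a ∈ (Finset.HasAntidiagonal.antidiagonal j).filter (fun a => a.1 ∈ Set.Ioo 0 j),
          (-1:ℂ)^a.1 * esm A a.1 x * psums A a.2 x := by
        funext x; exact psums_newton A x hj
      rw [e]
      refine ContDiffOn.sub ((contDiffOn_const.mul (contDiffOn_esm hA j))) ?_
      refine ContDiffOn.sum fun a ha => ?_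
      simp only [Finset.mem_filter, Finset.HasAntidiagonal.mem_antidiagonal, Set.mem_Ioo] at ha
      exact (contDiffOn_const.mul (contDiffOn_esm hA a.1)).mul (ih a.2 (by omega))


noncomputable def nn (A : (Fin d → ℝ) → Matrix (Fin m) (Fin m) ℂ) (x : Fin d → ℝ) : ℕ :=
  ((A x).charpoly.roots.toFinset).card

noncomputable def kapE (s : Finset ℂ) : Fin s.card ≃ ↥s :=
  (Fintype.equivFinOfCardEq (Fintype.card_coe s)).symm

noncomputable def kap (A : (Fin d → ℝ) → Matrix (Fin m) (Fin m) ℂ) (x : Fin d → ℝ) :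
    Fin (nn A x) → ℂ := fun i => (kapE ((A x).charpoly.roots.toFinset) i : ℂ)

noncomputable def cnt (A : (Fin d → ℝ) → Matrix (Fin m) (Fin m) ℂ) (x : Fin d → ℝ)
    (i : Fin (nn A x)) : ℕ := (A x).charpoly.roots.count (kap A x i)

noncomputable def hank (A : (Fin d → ℝ) → Matrix (Fin m) (Fin m) ℂ) (N : ℕ) (x : Fin d → ℝ) :
    Matrix (Fin N) (Fin N) ℂ := Matrix.of fun i j => psums A ((i:ℕ)+(j:ℕ)) x

lemma kap_injective (A : (Fin d → ℝ) → Matrix (Fin m) (Fin m) ℂ) (x : Fin d → ℝ) :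
    Function.Injective (kap A x) := by
  intro a b hab
  exact (kapE _).injective (Subtype.coe_injective hab)

lemma kap_mem (A : (Fin d → ℝ) → Matrix (Fin m) (Fin m) ℂ) (x : Fin d → ℝ) (i : Fin (nn A x)) :
    kap A x i ∈ (A x).charpoly.roots.toFinset :=
  (kapE ((A x).charpoly.roots.toFinset) i).2

lemma kap_surj (A : (Fin d → ℝ) → Matrix (Fin m) (Fin m) ℂ) (x : Fin d → ℝ) {a : ℂ}
    (ha : a ∈ (A x).charpoly.roots.toFinset) : ∃ i, kap A x i = a := by
  obtain ⟨i, hi⟩ := (kapE ((A x).charpoly.roots.toFinset)).surjective ⟨a, ha⟩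
  exact ⟨i, congrArg Subtype.val hi⟩

lemma cnt_pos (A : (Fin d → ℝ) → Matrix (Fin m) (Fin m) ℂ) (x : Fin d → ℝ) (i : Fin (nn A x)) :
    0 < cnt A x i := by
  rw [cnt, Multiset.count_pos, ← Multiset.mem_toFinset]
  exact kap_mem A x i

lemma psums_eq_weighted (A : (Fin d → ℝ) → Matrix (Fin m) (Fin m) ℂ) (x : Fin d → ℝ) (j : ℕ) :
    psums A j x = ∑ i : Fin (nn A x), (cnt A x i : ℂ) * kap A x i ^ j := by
  rw [psums, Finset.sum_multiset_map_count]
  rw [← Finset.sum_coe_sort _ (fun a => ((A x).charpoly.roots.count a) • (a ^ j))]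
  rw [← Equiv.sum_comp (kapE ((A x).charpoly.roots.toFinset))
    (fun a => ((A x).charpoly.roots.count (a:ℂ)) • ((a:ℂ) ^ j))]
  refine Finset.sum_congr rfl fun i _ => ?_
  rw [nsmul_eq_mul]
  rfl

lemma hank_factor (A : (Fin d → ℝ) → Matrix (Fin m) (Fin m) ℂ) (x : Fin d → ℝ) (N : ℕ) :
    hank A N x =
      (Matrix.of fun (j : Fin N) (i : Fin (nn A x)) => (cnt A x i : ℂ) * kap A x i ^ (j:ℕ)) *
      (Matrix.of fun (i : Fin (nn A x)) (j : Fin N) => kap A x i ^ (j:ℕ)) := by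
  ext a b
  rw [Matrix.mul_apply]
  simp only [Matrix.of_apply, hank]
  rw [psums_eq_weighted]
  refine Finset.sum_congr rfl fun i _ => ?_
  rw [pow_add]
  ring

lemma det_hank_nn_ne_zero (A : (Fin d → ℝ) → Matrix (Fin m) (Fin m) ℂ) (x : Fin d → ℝ) :
    (hank A (nn A x) x).det ≠ 0 := by
  have hfac : hank A (nn A x) x =
      ((Matrix.vandermonde (kap A x))ᵀ * Matrix.diagonal (fun i => (cnt A x i : ℂ))) *
      Matrix.vandermonde (kap A x) := by
    rw [hank_factor A x (nn A x)]
    congr 1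
    ext j i
    simp [Matrix.mul_diagonal, Matrix.vandermonde, Matrix.transpose_apply]
    ring
  rw [hfac, Matrix.det_mul, Matrix.det_mul, Matrix.det_transpose, Matrix.det_diagonal]
  have hv : (Matrix.vandermonde (kap A x)).det ≠ 0 := by
    rw [Matrix.det_vandermonde]
    refine Finset.prod_ne_zero_iff.mpr fun i _ => Finset.prod_ne_zero_iff.mpr fun j hj => ?_
    rw [Finset.mem_Ioi] at hj
    exact sub_ne_zero_of_ne (fun h => absurd (kap_injective A x h) (ne_of_gt hj))
  refine mul_ne_zero (mul_ne_zero hv ?_) hv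
  refine Finset.prod_ne_zero_iff.mpr fun i _ => ?_
  exact_mod_cast (cnt_pos A x i).ne'


lemma contDiffOn_evalFam {U0 : Set (Fin d → ℝ)} {G : (Fin d → ℝ) → ℂ[X]} {N : ℕ}
    (hGc : ∀ t, ContDiffOn ℝ (⊤:ℕ∞) (fun x => (G x).coeff t) U0)
    (hdeg : ∀ x, (G x).natDegree < N) :
    ContDiffOn ℝ (⊤:ℕ∞) (fun p : (Fin d → ℝ) × ℂ => (G p.1).eval p.2) (U0 ×ˢ Set.univ) := by
  have e : (fun p : (Fin d → ℝ) × ℂ => (G p.1).eval p.2)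
      = fun p => ∑ i ∈ Finset.range N, (G p.1).coeff i * p.2 ^ i := by
    funext p; exact Polynomial.eval_eq_sum_range' (hdeg p.1) p.2
  rw [e]
  refine ContDiffOn.sum fun i _ => ContDiffOn.mul ?_ ?_
  · exact (hGc i).comp contDiff_fst.contDiffOn (fun p hp => hp.1)
  · exact (contDiff_snd.pow i).contDiffOn

lemma exists_smooth_root {U0 : Set (Fin d → ℝ)} (hU0 : IsOpen U0) {x0 : Fin d → ℝ} (hx0 : x0 ∈ U0)
    {G : (Fin d → ℝ) → ℂ[X]} {N : ℕ}
    (hdeg : ∀ x, (G x).natDegree < N)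
    (hGc : ∀ t, ContDiffOn ℝ (⊤:ℕ∞) (fun x => (G x).coeff t) U0)
    {z0 : ℂ} (hroot : (G x0).eval z0 = 0)
    (hsimple : ((G x0).derivative).eval z0 ≠ 0) :
    ∃ (V : Set (Fin d → ℝ)) (lam : (Fin d → ℝ) → ℂ), IsOpen V ∧ x0 ∈ V ∧ V ⊆ U0 ∧
      ContDiffOn ℝ (⊤:ℕ∞) lam V ∧ lam x0 = z0 ∧ ∀ x ∈ V, (G x).eval (lam x) = 0 := by
  classical
  set E := ((Fin d → ℝ) × ℂ)
  set F : E → ℂ := fun p => (G p.1).eval p.2 with hF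
  set φ : E → E := fun p => (p.1, F p) with hφ
  have hn1 : (1 : WithTop ℕ∞) ≤ ((⊤:ℕ∞) : WithTop ℕ∞) := by
    exact_mod_cast le_top
  have hFsm : ContDiffOn ℝ (⊤:ℕ∞) F (U0 ×ˢ Set.univ) := contDiffOn_evalFam hGc hdeg
  have hopen : IsOpen (U0 ×ˢ (Set.univ : Set ℂ)) := hU0.prod isOpen_univ
  have hFat : ∀ p : E, p ∈ U0 ×ˢ Set.univ → ContDiffAt ℝ (⊤:ℕ∞) F p := fun p hp =>
    (hFsm p hp).contDiffAt (hopen.mem_nhds hp)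
  have hφat : ∀ p : E, p ∈ U0 ×ˢ Set.univ → ContDiffAt ℝ (⊤:ℕ∞) φ p := fun p hp =>
    contDiffAt_fst.prodMk (hFat p hp)
  -- key: invertible derivative at good points
  have key : ∀ p : E, p ∈ U0 ×ˢ Set.univ → ((G p.1).derivative).eval p.2 ≠ 0 →
      ∃ (e : E ≃L[ℝ] E), HasFDerivAt φ (e : E →L[ℝ] E) p := by
    intro p hp hw
    set w : ℂ := ((G p.1).derivative).eval p.2 with hwdef
    have hdiff : DifferentiableAt ℝ F p := ((hFat p hp).differentiableAt (by simp))
    set D : E →L[ℝ] ℂ := fderiv ℝ F p with hD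
    have hDF : HasFDerivAt F D p := hdiff.hasFDerivAt
    -- partial derivative in the second variable
    have hins : HasFDerivAt (fun z : ℂ => (p.1, z))
        (((0 : ℂ →L[ℝ] (Fin d → ℝ))).prod (ContinuousLinearMap.id ℝ ℂ)) p.2 :=
      (hasFDerivAt_const p.1 p.2).prodMk (hasFDerivAt_id p.2)
    have hcomp : HasFDerivAt (fun z : ℂ => F (p.1, z))
        (D.comp (((0 : ℂ →L[ℝ] (Fin d → ℝ))).prod (ContinuousLinearMap.id ℝ ℂ))) p.2 := by
      have := hDF.comp p.2 (by simpa using hins)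
      exact this
    have hder : HasFDerivAt (fun z : ℂ => F (p.1, z))
        ((ContinuousLinearMap.smulRight (1 : ℂ →L[ℂ] ℂ) w).restrictScalars ℝ) p.2 := by
      have h1 : HasDerivAt (fun z : ℂ => (G p.1).eval z) w p.2 := Polynomial.hasDerivAt _ _
      exact (h1.hasFDerivAt).restrictScalars ℝ
    have hDsnd : ∀ v : ℂ, D (0, v) = w * v := by
      intro v
      have hEq := hcomp.unique hder
      have := congrArg (fun L : ℂ →L[ℝ] ℂ => L v) hEq
      have h' : ((0 : ℂ →L[ℝ] (Fin d → ℝ)).prod (ContinuousLinearMap.id ℝ ℂ)) v = (0, v) := rfl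
      simp only [ContinuousLinearMap.comp_apply, h'] at this
      simpa [ContinuousLinearMap.smulRight_apply, ContinuousLinearMap.prod_apply, smul_eq_mul, mul_comm] using this
    -- build the equivalence
    set f₁ : E →L[ℝ] E := (ContinuousLinearMap.fst ℝ (Fin d → ℝ) ℂ).prod D with hf₁
    set K : E →L[ℝ] ℂ := D.comp ((ContinuousLinearMap.fst ℝ (Fin d → ℝ) ℂ).prod 0) with hK
    set f₂ : E →L[ℝ] E := (ContinuousLinearMap.fst ℝ (Fin d → ℝ) ℂ).prod
      (w⁻¹ • ((ContinuousLinearMap.snd ℝ (Fin d → ℝ) ℂ) - K)) with hf₂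
    have hsplit : ∀ u : Fin d → ℝ, ∀ v : ℂ, D (u, v) = D (u, 0) + w * v := by
      intro u v
      have : ((u, v) : E) = (u, 0) + (0, v) := by simp
      rw [this, map_add, hDsnd]
    have h₁ : Function.LeftInverse f₂ f₁ := by
      intro q
      apply Prod.ext
      · rfl
      · show w⁻¹ • (D q - D (q.1, 0)) = q.2
        rw [hsplit q.1 q.2]
        simp [smul_eq_mul]
        field_simp
    have h₂ : Function.RightInverse f₂ f₁ := by
      intro q
      apply Prod.ext
      · rfl
      · show D (q.1, w⁻¹ • (q.2 - D (q.1, 0))) = q.2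
        rw [hsplit]
        simp [smul_eq_mul]
        field_simp
        ring
    exact ⟨ContinuousLinearEquiv.equivOfInverse f₁ f₂ h₁ h₂, by
      have : (ContinuousLinearEquiv.equivOfInverse f₁ f₂ h₁ h₂ : E →L[ℝ] E) = f₁ := rfl
      rw [this]
      exact (hasFDerivAt_fst).prodMk hDF⟩
  have hp0 : ((x0, z0) : E) ∈ U0 ×ˢ Set.univ := ⟨hx0, trivial⟩
  obtain ⟨e0, hφ'0⟩ := key (x0, z0) hp0 hsimple
  have hφsm0 : ContDiffAt ℝ (⊤:ℕ∞) φ (x0, z0) := hφat _ hp0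
  have hn : ((⊤:ℕ∞) : WithTop ℕ∞) ≠ 0 := by simp
  set Φ := hφsm0.toOpenPartialHomeomorph φ hφ'0 hn with hΦ
  have hΦcoe : (Φ : E → E) = φ := rfl
  have hsrc : ((x0, z0) : E) ∈ Φ.source := hφsm0.mem_toOpenPartialHomeomorph_source hφ'0 hn
  have hφ0 : φ (x0, z0) = (x0, 0) := by simp [hφ, hF, hroot]
  have htgt : ((x0, 0) : E) ∈ Φ.target := by
    rw [← hφ0]; exact hφsm0.image_mem_toOpenPartialHomeomorph_target hφ'0 hn
  -- the good subset of the target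
  have hGoodOpen : IsOpen ((U0 ×ˢ (Set.univ : Set ℂ)) ∩
      {p : E | ((G p.1).derivative).eval p.2 ≠ 0}) := by
    have hcont : ContDiffOn ℝ (⊤:ℕ∞) (fun p : E => ((G p.1).derivative).eval p.2)
        (U0 ×ˢ Set.univ) := by
      refine contDiffOn_evalFam (G := fun x => (G x).derivative) (N := N) ?_ ?_
      · intro t
        have e : (fun x => ((G x).derivative).coeff t)
            = fun x => (G x).coeff (t+1) * ((t:ℂ)+1) := by
          funext x; rw [Polynomial.coeff_derivative]
        rw [e]
        exact (hGc (t+1)).mul contDiffOn_const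
      · intro x
        have h := Polynomial.natDegree_derivative_le (G x)
        have h2 := hdeg x
        show (derivative (G x)).natDegree < N
        omega
    have := (hcont.continuousOn).isOpen_inter_preimage hopen (isOpen_compl_singleton : IsOpen ({(0:ℂ)}ᶜ))
    simpa [Set.preimage, Set.compl_eq_univ_diff] using this
  set Good : Set E := Φ.source ∩ ((U0 ×ˢ (Set.univ : Set ℂ)) ∩
      {p : E | ((G p.1).derivative).eval p.2 ≠ 0}) with hGood
  have hGoodOpen' : IsOpen Good := Φ.open_source.inter hGoodOpen
  set T : Set E := Φ.target ∩ (Φ.symm) ⁻¹' Good with hT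
  have hTopen : IsOpen T :=
    (Φ.continuousOn_symm).isOpen_inter_preimage Φ.open_target hGoodOpen'
  set V : Set (Fin d → ℝ) := {x | ((x, 0) : E) ∈ T} with hV
  have hVopen : IsOpen V := hTopen.preimage (continuous_id.prodMk continuous_const)
  have hsymm0 : Φ.symm (x0, 0) = (x0, z0) := by
    rw [← hφ0, ← hΦcoe]; exact Φ.left_inv hsrc
  have hx0V : x0 ∈ V := by
    constructor
    · exact htgt
    · show Φ.symm (x0, 0) ∈ Good
      rw [hsymm0]
      exact ⟨hsrc, hp0, hsimple⟩
  set lam : (Fin d → ℝ) → ℂ := fun x => (Φ.symm (x, 0)).2 with hlam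
  have hVmem : ∀ x ∈ V, Φ.symm (x, 0) = (x, lam x) ∧ F (x, lam x) = 0 ∧ x ∈ U0 := by
    intro x hxV
    have h1 : ((x, 0) : E) ∈ Φ.target := hxV.1
    have h2 : Φ.symm (x, 0) ∈ Good := hxV.2
    have h3 : φ (Φ.symm (x, 0)) = (x, 0) := by rw [← hΦcoe]; exact Φ.right_inv h1
    have h4 : (Φ.symm (x, 0)).1 = x := congrArg Prod.fst h3
    have h5 : Φ.symm (x, 0) = (x, lam x) := by
      rw [hlam]; exact Prod.ext h4 rfl
    refine ⟨h5, ?_, ?_⟩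
    · have := congrArg Prod.snd h3
      rw [h5] at this
      exact this
    · have := h2.2.1.1
      rwa [h4] at this
  have hVsub : V ⊆ U0 := fun x hx => (hVmem x hx).2.2
  have hlamx0 : lam x0 = z0 := by rw [hlam]; simp [hsymm0]
  refine ⟨V, lam, hVopen, hx0V, hVsub, ?_, hlamx0, ?_⟩
  · -- smoothness
    intro x1 hx1
    have h1 : ((x1, 0) : E) ∈ Φ.target := hx1.1
    have h2 : Φ.symm (x1, 0) ∈ Good := hx1.2
    obtain ⟨e1, hφ'1⟩ := key _ h2.2.1 h2.2.2
    have hφsm1 : ContDiffAt ℝ (⊤:ℕ∞) φ (Φ.symm (x1, 0)) := hφat _ h2.2.1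
    have hsymm_smooth : ContDiffAt ℝ (⊤:ℕ∞) (Φ.symm) (x1, 0) :=
      Φ.contDiffAt_symm h1 hφ'1 hφsm1
    have : ContDiffAt ℝ (⊤:ℕ∞) lam x1 := by
      have hemb : ContDiffAt ℝ (⊤:ℕ∞) (fun x : Fin d → ℝ => ((x, 0) : E)) x1 :=
        contDiffAt_id.prodMk contDiffAt_const
      exact contDiffAt_snd.comp x1 (hsymm_smooth.comp x1 hemb)
    exact this.contDiffWithinAt
  · intro x hx
    exact (hVmem x hx).2.1


lemma le_nn_of_det_hank_ne_zero (A : (Fin d → ℝ) → Matrix (Fin m) (Fin m) ℂ) (x : Fin d → ℝ)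
    {n : ℕ} (h : (hank A n x).det ≠ 0) : n ≤ nn A x := by
  by_contra hlt
  push_neg at hlt
  set V : Matrix (Fin (nn A x)) (Fin n) ℂ :=
    Matrix.of fun (i : Fin (nn A x)) (j : Fin n) => kap A x i ^ (j:ℕ) with hV
  have hninj : ¬ Function.Injective V.mulVecLin := by
    intro hinj
    have hfr := LinearMap.finrank_le_finrank_of_injective hinj
    rw [Module.finrank_fin_fun, Module.finrank_fin_fun] at hfr
    omega
  rw [← LinearMap.ker_eq_bot] at hninj
  obtain ⟨v, hvker, hv0⟩ := Submodule.ne_bot_iff _ |>.mp hninj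
  have hVv : V *ᵥ v = 0 := hvker
  have hzero : (hank A n x) *ᵥ v = 0 := by
    rw [hank_factor A x n, ← Matrix.mulVec_mulVec, hVv, Matrix.mulVec_zero]
  exact h (Matrix.exists_mulVec_eq_zero_iff.mp ⟨v, hv0, hzero⟩)

noncomputable def sqf (A : (Fin d → ℝ) → Matrix (Fin m) (Fin m) ℂ) (x : Fin d → ℝ) : ℂ[X] :=
  ∏ a ∈ (A x).charpoly.roots.toFinset, (X - C a)

lemma sqf_monic (A : (Fin d → ℝ) → Matrix (Fin m) (Fin m) ℂ) (x : Fin d → ℝ) :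
    (sqf A x).Monic := monic_prod_of_monic _ _ (fun a _ => monic_X_sub_C a)

lemma sqf_natDegree (A : (Fin d → ℝ) → Matrix (Fin m) (Fin m) ℂ) (x : Fin d → ℝ) :
    (sqf A x).natDegree = nn A x := by
  rw [sqf, Polynomial.natDegree_prod _ _ (fun a _ => X_sub_C_ne_zero a)]
  simp [Polynomial.natDegree_X_sub_C, nn]

lemma sqf_eval_root (A : (Fin d → ℝ) → Matrix (Fin m) (Fin m) ℂ) (x : Fin d → ℝ) {a : ℂ}
    (ha : a ∈ (A x).charpoly.roots.toFinset) : (sqf A x).eval a = 0 := by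
  rw [sqf, Polynomial.eval_prod]
  exact Finset.prod_eq_zero ha (by simp)

lemma mem_toFinset_of_eval_sqf_eq_zero (A : (Fin d → ℝ) → Matrix (Fin m) (Fin m) ℂ)
    (x : Fin d → ℝ) {a : ℂ} (ha : (sqf A x).eval a = 0) :
    a ∈ (A x).charpoly.roots.toFinset := by
  rw [sqf, Polynomial.eval_prod] at ha
  obtain ⟨b, hb, hab⟩ := Finset.prod_eq_zero_iff.mp ha
  simp only [Polynomial.eval_sub, Polynomial.eval_X, Polynomial.eval_C, sub_eq_zero] at hab
  rwa [hab]

lemma sqf_system (A : (Fin d → ℝ) → Matrix (Fin m) (Fin m) ℂ) (x : Fin d → ℝ) (j : ℕ) :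
    ∑ t ∈ Finset.range (nn A x + 1), (sqf A x).coeff t * psums A (j + t) x = 0 := by
  simp only [psums_eq_weighted, Finset.mul_sum]
  rw [Finset.sum_comm]
  refine Finset.sum_eq_zero fun i _ => ?_
  have he : (sqf A x).eval (kap A x i) = 0 :=
    sqf_eval_root A x (kap_mem A x i)
  rw [Polynomial.eval_eq_sum_range' (n := nn A x + 1) (by rw [sqf_natDegree]; omega) (kap A x i)] at he
  have step : ∀ t, (sqf A x).coeff t * ((cnt A x i : ℂ) * kap A x i ^ (j + t))
      = ((cnt A x i : ℂ) * kap A x i ^ j) * ((sqf A x).coeff t * kap A x i ^ t) := by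
    intro t; rw [pow_add]; ring
  rw [Finset.sum_congr rfl (fun t _ => step t), ← Finset.mul_sum, he, mul_zero]

lemma hank_mulVec_sqf (A : (Fin d → ℝ) → Matrix (Fin m) (Fin m) ℂ) (x : Fin d → ℝ)
    {N : ℕ} (hN : nn A x = N) :
    hank A N x *ᵥ (fun t : Fin N => (sqf A x).coeff t)
      = fun j : Fin N => -psums A ((j:ℕ) + N) x := by
  funext j
  have hs := sqf_system A x j
  rw [hN] at hs
  rw [Finset.sum_range_succ] at hs
  have hc : (sqf A x).coeff N = 1 := by
    have := (sqf_monic A x).coeff_natDegree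
    rwa [sqf_natDegree, hN] at this
  rw [hc, one_mul] at hs
  have : ∑ t ∈ Finset.range N, (sqf A x).coeff t * psums A ((j:ℕ) + t) x
      = ∑ t : Fin N, (sqf A x).coeff t * psums A ((j:ℕ) + t) x :=
    (Fin.sum_univ_eq_sum_range _ N).symm
  rw [this] at hs
  have e : ∀ t : Fin N, hank A N x j t * (sqf A x).coeff t
      = (sqf A x).coeff t * psums A ((j:ℕ) + t) x := by
    intro t; rw [hank]; simp only [Matrix.of_apply]; ring
  have goal : ∑ t : Fin N, hank A N x j t * (sqf A x).coeff t = -psums A ((j:ℕ) + N) x := by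
    rw [Finset.sum_congr rfl (fun t _ => e t)]
    linear_combination hs
  simpa [Matrix.mulVec, dotProduct] using goal
lemma mulVec_cancel {N : ℕ} {H : Matrix (Fin N) (Fin N) ℂ} (hdet : H.det ≠ 0)
    {u v : Fin N → ℂ} (h : H *ᵥ u = H *ᵥ v) : u = v := by
  have hu : IsUnit H.det := isUnit_iff_ne_zero.mpr hdet
  have h2 := congrArg (fun w => H⁻¹ *ᵥ w) h
  simpa [Matrix.mulVec_mulVec, Matrix.nonsing_inv_mul _ hu, Matrix.one_mulVec] using h2

noncomputable def cvec (A : (Fin d → ℝ) → Matrix (Fin m) (Fin m) ℂ) (n : ℕ) (y : Fin d → ℝ) :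
    Fin n → ℂ := (hank A n y)⁻¹ *ᵥ (fun j : Fin n => -psums A ((j:ℕ) + n) y)

noncomputable def GG (A : (Fin d → ℝ) → Matrix (Fin m) (Fin m) ℂ) (n : ℕ) (y : Fin d → ℝ) :
    ℂ[X] := X^n + ∑ t : Fin n, C (cvec A n y t) * X^(t:ℕ)

lemma GG_coeff (A : (Fin d → ℝ) → Matrix (Fin m) (Fin m) ℂ) (n : ℕ) (y : Fin d → ℝ) (k : ℕ) :
    (GG A n y).coeff k = (if k = n then 1 else 0) +
      (if h : k < n then cvec A n y ⟨k, h⟩ else 0) := by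
  rw [GG, Polynomial.coeff_add, Polynomial.coeff_X_pow, Polynomial.finset_sum_coeff]
  congr 1
  have e : ∀ t : Fin n, (C (cvec A n y t) * X^(t:ℕ)).coeff k
      = if k = (t:ℕ) then cvec A n y t else 0 := by
    intro t
    rw [Polynomial.coeff_C_mul, Polynomial.coeff_X_pow]
    by_cases h : k = (t:ℕ) <;> simp [h]
  rw [Finset.sum_congr rfl (fun t _ => e t)]
  by_cases h : k < n
  · rw [dif_pos h]
    rw [Finset.sum_eq_single (⟨k, h⟩ : Fin n)]
    · simp
    · intro t _ ht
      rw [if_neg]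
      intro hkt
      exact ht (by ext; simp [← hkt])
    · intro habs; exact absurd (Finset.mem_univ _) habs
  · rw [dif_neg h]
    refine Finset.sum_eq_zero fun t _ => ?_
    rw [if_neg]
    intro hkt
    exact h (hkt ▸ t.2)

lemma GG_natDegree_lt (A : (Fin d → ℝ) → Matrix (Fin m) (Fin m) ℂ) (n : ℕ) (y : Fin d → ℝ) :
    (GG A n y).natDegree < n + 1 := by
  have : (GG A n y).natDegree ≤ n := by
    refine Polynomial.natDegree_le_iff_coeff_eq_zero.mpr fun N hN => ?_
    rw [GG_coeff]
    rw [if_neg (by omega), dif_neg (by omega)]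
    simp
  omega

lemma GG_eq_sqf {A : (Fin d → ℝ) → Matrix (Fin m) (Fin m) ℂ} {n : ℕ} {y : Fin d → ℝ}
    (hdet : (hank A n y).det ≠ 0) (hnn : nn A y = n) : GG A n y = sqf A y := by
  have hu : IsUnit (hank A n y).det := isUnit_iff_ne_zero.mpr hdet
  have hc : hank A n y *ᵥ cvec A n y = fun j : Fin n => -psums A ((j:ℕ) + n) y := by
    rw [cvec, Matrix.mulVec_mulVec, Matrix.mul_nonsing_inv _ hu, Matrix.one_mulVec]
  have hsys := hank_mulVec_sqf A y hnn
  have hcv : cvec A n y = fun t : Fin n => (sqf A y).coeff t :=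
    mulVec_cancel hdet (hc.trans hsys.symm)
  ext k
  rw [GG_coeff]
  rcases lt_trichotomy k n with hk | hk | hk
  · rw [dif_pos hk, if_neg (by omega), zero_add]
    exact congrFun hcv ⟨k, hk⟩
  · subst hk
    rw [if_pos rfl, dif_neg (by omega), add_zero]
    have := (sqf_monic A y).coeff_natDegree
    rw [sqf_natDegree, hnn] at this
    exact this.symm
  · rw [if_neg (by omega), dif_neg (by omega), add_zero]
    refine (Polynomial.coeff_eq_zero_of_natDegree_lt ?_).symm
    rw [sqf_natDegree, hnn]
    exact hk

lemma contDiffOn_hank_det {A : (Fin d → ℝ) → Matrix (Fin m) (Fin m) ℂ} {U : Set (Fin d → ℝ)}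
    (hA : ∀ i j, ContDiffOn ℝ (⊤:ℕ∞) (fun x => A x i j) U) (n : ℕ) :
    ContDiffOn ℝ (⊤:ℕ∞) (fun y => (hank A n y).det) U :=
  contDiffOn_det (fun i j => by
    have : (fun y => hank A n y i j) = psums A ((i:ℕ)+(j:ℕ)) := rfl
    exact contDiffOn_psums hA _)

lemma contDiffOn_cvec {A : (Fin d → ℝ) → Matrix (Fin m) (Fin m) ℂ} {U : Set (Fin d → ℝ)}
    (hA : ∀ i j, ContDiffOn ℝ (⊤:ℕ∞) (fun x => A x i j) U) (n : ℕ) (t : Fin n) :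
    ContDiffOn ℝ (⊤:ℕ∞) (fun y => cvec A n y t)
      (U ∩ {y | (hank A n y).det ≠ 0}) := by
  have e : (fun y => cvec A n y t) = fun y =>
      ∑ j : Fin n, (((hank A n y).det)⁻¹ * (hank A n y).adjugate t j) * (-psums A ((j:ℕ) + n) y) := by
    funext y
    rw [cvec]
    simp only [Matrix.mulVec, dotProduct, Matrix.inv_def, Ring.inverse_eq_inv,
      Matrix.smul_apply, smul_eq_mul]
  rw [e]
  have hsub : (U ∩ {y | (hank A n y).det ≠ 0}) ⊆ U := Set.inter_subset_left
  refine ContDiffOn.sum fun j _ => ContDiffOn.mul (ContDiffOn.mul ?_ ?_) ?_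
  · exact ContDiffOn.inv ((contDiffOn_hank_det hA n).mono hsub) (fun y hy => hy.2)
  · have e2 : (fun y => (hank A n y).adjugate t j)
        = fun y => ((hank A n y).updateRow j (Pi.single t 1)).det := by
      funext y; rw [Matrix.adjugate_apply]
    rw [e2]
    refine (contDiffOn_det fun a b => ?_).mono hsub
    by_cases hab : a = j
    · subst hab
      have : (fun y => ((hank A n y).updateRow a (Pi.single t 1)) a b)
          = fun _ : Fin d → ℝ => (Pi.single t (1:ℂ) : Fin n → ℂ) b := by
        funext y; rw [Matrix.updateRow_apply, if_pos rfl]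
      rw [this]; exact contDiffOn_const
    · have : (fun y => ((hank A n y).updateRow j (Pi.single t 1)) a b)
          = fun y => psums A ((a:ℕ)+(b:ℕ)) y := by
        funext y; rw [Matrix.updateRow_apply, if_neg hab]; rfl
      rw [this]
      exact contDiffOn_psums hA _
  · exact (ContDiffOn.neg (contDiffOn_psums hA _)).mono hsub
lemma rootMultiplicity_le_of_hasse_ne_zero {p : ℂ[X]} {z : ℂ} {b : ℕ}
    (h : ((Polynomial.hasseDeriv b p)).eval z ≠ 0) : p.rootMultiplicity z ≤ b := by
  by_contra hlt
  push_neg at hlt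
  have hrm : p.rootMultiplicity z = (Polynomial.taylor z p).natTrailingDegree := by
    rw [Polynomial.rootMultiplicity_eq_natTrailingDegree, Polynomial.taylor_apply]
  apply h
  rw [← Polynomial.taylor_coeff]
  exact Polynomial.coeff_eq_zero_of_lt_natTrailingDegree (by omega)

lemma hasse_rootMultiplicity_ne_zero {p : ℂ[X]} (hp : p ≠ 0) (z : ℂ) :
    ((Polynomial.hasseDeriv (p.rootMultiplicity z) p)).eval z ≠ 0 := by
  have hrm : p.rootMultiplicity z = (Polynomial.taylor z p).natTrailingDegree := by
    rw [Polynomial.rootMultiplicity_eq_natTrailingDegree, Polynomial.taylor_apply]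
  rw [← Polynomial.taylor_coeff, hrm]
  have htz : Polynomial.taylor z p ≠ 0 := fun h0 =>
    hp (Polynomial.taylor_injective z (by rw [h0, map_zero]))
  exact Polynomial.trailingCoeff_nonzero_iff_nonzero.mpr htz

lemma sqf_derivative_ne_zero (A : (Fin d → ℝ) → Matrix (Fin m) (Fin m) ℂ) (x : Fin d → ℝ)
    {μ : ℂ} (hμ : μ ∈ (A x).charpoly.roots.toFinset) :
    ((sqf A x).derivative).eval μ ≠ 0 := by
  set s := (A x).charpoly.roots.toFinset
  have hfac : sqf A x = (X - C μ) * ∏ a ∈ s.erase μ, (X - C a) :=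
    (Finset.mul_prod_erase s _ hμ).symm
  rw [hfac, Polynomial.derivative_mul]
  simp only [Polynomial.derivative_sub, Polynomial.derivative_X, Polynomial.derivative_C,
    sub_zero, one_mul, Polynomial.eval_add, Polynomial.eval_mul, Polynomial.eval_sub,
    Polynomial.eval_X, Polynomial.eval_C, sub_self, zero_mul, add_zero]
  rw [Polynomial.eval_prod]
  refine Finset.prod_ne_zero_iff.mpr fun a ha => ?_
  simp only [Polynomial.eval_sub, Polynomial.eval_X, Polynomial.eval_C]
  exact sub_ne_zero_of_ne (fun h => (Finset.mem_erase.mp ha).1 h.symm)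

lemma charpoly_prod_form (A : (Fin d → ℝ) → Matrix (Fin m) (Fin m) ℂ) (x : Fin d → ℝ)
    {n : ℕ} (lam : Fin n → ℂ) (hinj : Function.Injective lam)
    (himg : (A x).charpoly.roots.toFinset = Finset.image lam Finset.univ) :
    (A x).charpoly = ∏ k : Fin n, (X - C (lam k)) ^ ((A x).charpoly.rootMultiplicity (lam k)) := by
  classical
  conv_lhs => rw [charpoly_eq_prod_roots (A x)]
  rw [Finset.prod_multiset_map_count, himg, Finset.prod_image (fun a _ b _ h => hinj h)]
  refine Finset.prod_congr rfl fun k _ => ?_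
  rw [Polynomial.count_roots]

lemma sum_rootMultiplicity (A : (Fin d → ℝ) → Matrix (Fin m) (Fin m) ℂ) (x : Fin d → ℝ)
    {n : ℕ} (lam : Fin n → ℂ) (hinj : Function.Injective lam)
    (himg : (A x).charpoly.roots.toFinset = Finset.image lam Finset.univ) :
    ∑ k : Fin n, (A x).charpoly.rootMultiplicity (lam k) = m := by
  classical
  have h1 : ∑ a ∈ (A x).charpoly.roots.toFinset, (A x).charpoly.roots.count a
      = Multiset.card (A x).charpoly.roots := Multiset.toFinset_sum_count_eq _
  rw [himg, Finset.sum_image (fun a _ b _ h => hinj h), card_roots_charpoly] at h1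
  simp only [Polynomial.count_roots] at h1
  exact h1

lemma contDiffOn_hasse_eval {A : (Fin d → ℝ) → Matrix (Fin m) (Fin m) ℂ} {U : Set (Fin d → ℝ)}
    (hA : ∀ i j, ContDiffOn ℝ (⊤:ℕ∞) (fun x => A x i j) U) {S : Set (Fin d → ℝ)}
    (hS : S ⊆ U) {lam : (Fin d → ℝ) → ℂ} (hlam : ContDiffOn ℝ (⊤:ℕ∞) lam S) (b : ℕ) :
    ContDiffOn ℝ (⊤:ℕ∞) (fun x => ((Polynomial.hasseDeriv b ((A x).charpoly))).eval (lam x)) S := by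
  have e : (fun x => ((Polynomial.hasseDeriv b ((A x).charpoly))).eval (lam x))
      = fun x => ∑ i ∈ Finset.range (m+1),
          (((i+b).choose b : ℂ) * ((A x).charpoly).coeff (i+b)) * lam x ^ i := by
    funext x
    rw [Polynomial.eval_eq_sum_range' (n := m+1) (by
      have h1 := Polynomial.natDegree_hasseDeriv_le ((A x).charpoly) b
      have h2 := charpoly_natDegree (A x)
      omega) (lam x)]
    refine Finset.sum_congr rfl fun i _ => ?_
    rw [Polynomial.hasseDeriv_coeff]
  rw [e]
  refine ContDiffOn.sum fun i _ => ContDiffOn.mul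
    (contDiffOn_const.mul ((contDiffOn_charpoly_coeff hA _).mono hS)) (hlam.pow i)
lemma continuousOn_matrix_pow {S : Set (Fin d → ℝ)} {N : ℕ} (e : ℕ)
    {M : (Fin d → ℝ) → Matrix (Fin N) (Fin N) ℂ}
    (hM : ∀ i j, ContinuousOn (fun y => M y i j) S) :
    ∀ i j, ContinuousOn (fun y => (M y ^ e) i j) S := by
  induction e with
  | zero =>
    intro i j
    have : (fun y : Fin d → ℝ => (M y ^ 0) i j) = fun _ => (1 : Matrix (Fin N) (Fin N) ℂ) i j := by
      funext y; rw [pow_zero]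
    rw [this]; exact continuousOn_const
  | succ e ih =>
    intro i j
    have : (fun y => (M y ^ (e+1)) i j) = fun y => ∑ t, (M y ^ e) i t * M y t j := by
      funext y; rw [pow_succ, Matrix.mul_apply]
    rw [this]
    exact continuousOn_finset_sum _ fun t _ => (ih i t).mul (hM t j)

lemma rank_lsc {N : ℕ} {M : (Fin d → ℝ) → Matrix (Fin N) (Fin N) ℂ} {S : Set (Fin d → ℝ)}
    (hS : IsOpen S) (hM : ∀ i j, ContinuousOn (fun y => M y i j) S) {x1 : Fin d → ℝ}
    (hx1 : x1 ∈ S) :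
    ∃ T, IsOpen T ∧ x1 ∈ T ∧ T ⊆ S ∧ ∀ y ∈ T, (M x1).rank ≤ (M y).rank := by
  classical
  set r := (M x1).rank with hr
  have hrfin : (M x1).rank = Module.finrank ℂ ↥(LinearMap.range (M x1).mulVecLin) := rfl
  set b := Module.finBasis ℂ ↥(LinearMap.range (M x1).mulVecLin)
  have hbmem : ∀ i, (↑(b i) : Fin N → ℂ) ∈ LinearMap.range (M x1).mulVecLin := fun i => (b i).2
  choose v hv using fun i => LinearMap.mem_range.mp (hbmem i)
  -- v indexed by Fin (finrank ...) = Fin r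
  have hli : LinearIndependent ℂ (fun i => M x1 *ᵥ v i) := by
    have e1 : (fun i => M x1 *ᵥ v i) = fun i => (↑(b i) : Fin N → ℂ) := by
      funext i; rw [← hv i]; rfl
    rw [e1]
    exact b.linearIndependent.map' (Submodule.subtype _) (Submodule.ker_subtype _)
  set T := S ∩ (fun y => (fun i => M y *ᵥ v i)) ⁻¹'
    {f : Fin (Module.finrank ℂ ↥(LinearMap.range (M x1).mulVecLin)) → (Fin N → ℂ) |
      LinearIndependent ℂ f} with hT
  have hTopen : IsOpen T := by
    refine ContinuousOn.isOpen_inter_preimage ?_ hS isOpen_setOf_linearIndependent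
    refine continuousOn_pi.mpr fun i => continuousOn_pi.mpr fun a => ?_
    have e2 : (fun y => (M y *ᵥ v i) a) = fun y => ∑ t, M y a t * v i t := by
      funext y; rfl
    rw [e2]
    exact continuousOn_finset_sum _ fun t _ => (hM a t).mul continuousOn_const
  refine ⟨T, hTopen, ⟨hx1, hli⟩, Set.inter_subset_left, fun y hy => ?_⟩
  have hw : LinearIndependent ℂ (fun i => M y *ᵥ v i) := hy.2
  set u : Fin (Module.finrank ℂ ↥(LinearMap.range (M x1).mulVecLin)) →
      ↥(LinearMap.range (M y).mulVecLin) :=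
    fun i => ⟨M y *ᵥ v i, LinearMap.mem_range.mpr ⟨v i, rfl⟩⟩ with hu
  have hui : LinearIndependent ℂ u := by
    apply LinearIndependent.of_comp (Submodule.subtype _)
    exact hw
  have hcard := hui.fintype_card_le_finrank
  rw [Fintype.card_fin] at hcard
  exact hcard

lemma exists_max_nat_on {α : Type*} {S : Set α} (hS : S.Nonempty) (f : α → ℕ) (C : ℕ)
    (hf : ∀ x ∈ S, f x ≤ C) : ∃ x0 ∈ S, ∀ x ∈ S, f x ≤ f x0 := by
  have hne : (f '' S).Nonempty := hS.image f
  have hbdd : BddAbove (f '' S) := ⟨C, fun y hy => by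
    obtain ⟨x, hx, rfl⟩ := hy; exact hf x hx⟩
  have hmem := Nat.sSup_mem hne hbdd
  obtain ⟨x0, hx0S, hx0⟩ := hmem
  exact ⟨x0, hx0S, fun x hx => hx0 ▸ le_csSup hbdd ⟨x, hx, rfl⟩⟩
end L31

open L31 in
/-- Lemma 3.1 (matrix-family form): for a smooth family of complex matrices, the set of
points near which the family has constant algebraic type is open and dense in `U`. -/
theorem lemma_3_1 {d m : ℕ} (U : Set (Fin d → ℝ)) (hU : IsOpen U)
    (A : (Fin d → ℝ) → Matrix (Fin m) (Fin m) ℂ)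
    (hA : ∀ i j, ContDiffOn ℝ (⊤ : ℕ∞) (fun x => A x i j) U) :
    IsOpen {p | p ∈ U ∧ HasConstAlgType A U p} ∧
      U ⊆ closure {p | p ∈ U ∧ HasConstAlgType A U p} := by
  constructor
  · rw [isOpen_iff_forall_mem_open]
    rintro p ⟨hpU, V, hVopen, hpV, hVU, rest⟩
    exact ⟨V, fun q hq => ⟨hVU hq, V, hVopen, hq, hVU, rest⟩, hVopen, hpV⟩
  · intro p hpU
    rw [mem_closure_iff]
    intro o ho hpo
    set W := o ∩ U with hW
    have hWopen : IsOpen W := ho.inter hU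
    have hpW : p ∈ W := ⟨hpo, hpU⟩
    have hWU : W ⊆ U := Set.inter_subset_right
    -- maximize the number of distinct eigenvalues over W
    obtain ⟨x0, hx0W, hx0max⟩ := exists_max_nat_on ⟨p, hpW⟩ (nn A) m (fun x _ => by
      have h1 : nn A x ≤ Multiset.card ((A x).charpoly.roots) := Multiset.toFinset_card_le _
      rwa [card_roots_charpoly] at h1)
    set n := nn A x0 with hn
    have hdet0 : (hank A n x0).det ≠ 0 := det_hank_nn_ne_zero A x0
    set U1 := W ∩ (fun y => (hank A n y).det) ⁻¹' {(0:ℂ)}ᶜ with hU1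
    have hU1open : IsOpen U1 :=
      ContinuousOn.isOpen_inter_preimage
        (((contDiffOn_hank_det hA n).mono hWU).continuousOn) hWopen
        (isOpen_compl_singleton)
    have hU1W : U1 ⊆ W := Set.inter_subset_left
    have hU1det : ∀ y ∈ U1, (hank A n y).det ≠ 0 := fun y hy => hy.2
    have hx0U1 : x0 ∈ U1 := ⟨hx0W, hdet0⟩
    have hnnU1 : ∀ y ∈ U1, nn A y = n := fun y hy =>
      le_antisymm (hx0max y (hU1W hy)) (le_nn_of_det_hank_ne_zero A y (hU1det y hy))
    have hGc : ∀ t, ContDiffOn ℝ (⊤:ℕ∞) (fun y => (GG A n y).coeff t) U1 := by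
      intro t
      by_cases ht : t < n
      · have e : (fun y => (GG A n y).coeff t) = fun y => cvec A n y ⟨t, ht⟩ := by
          funext y; rw [GG_coeff, if_neg (by omega), dif_pos ht, zero_add]
        rw [e]
        refine (contDiffOn_cvec hA n ⟨t, ht⟩).mono ?_
        exact fun y hy => ⟨hWU (hU1W hy), hU1det y hy⟩
      · have e : (fun y => (GG A n y).coeff t) = fun _ => (if t = n then (1:ℂ) else 0) := by
          funext y; rw [GG_coeff, dif_neg ht, add_zero]
        rw [e]; exact contDiffOn_const
    have hGG : ∀ y ∈ U1, GG A n y = sqf A y := fun y hy =>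
      GG_eq_sqf (hU1det y hy) (hnnU1 y hy)
    -- implicit function theorem applied to each simple root of the squarefree part
    have hkey : ∀ k : Fin n, ∃ (V : Set (Fin d → ℝ)) (lamk : (Fin d → ℝ) → ℂ),
        IsOpen V ∧ x0 ∈ V ∧ V ⊆ U1 ∧ ContDiffOn ℝ (⊤:ℕ∞) lamk V ∧ lamk x0 = kap A x0 k ∧
        ∀ x ∈ V, (GG A n x).eval (lamk x) = 0 := by
      intro k
      refine exists_smooth_root hU1open hx0U1 (G := GG A n) (N := n+1)
        (fun y => GG_natDegree_lt A n y) hGc ?_ ?_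
      · rw [hGG x0 hx0U1]; exact sqf_eval_root A x0 (kap_mem A x0 k)
      · rw [hGG x0 hx0U1]; exact sqf_derivative_ne_zero A x0 (kap_mem A x0 k)
    choose Vk lam hVkopen hx0Vk hVkU1 hlamsm hlamx0 hlamroot using hkey
    set V2 := U1 ∩ ⋂ k : Fin n, Vk k with hV2
    have hV2open : IsOpen V2 := hU1open.inter (isOpen_iInter_of_finite hVkopen)
    have hx0V2 : x0 ∈ V2 := ⟨hx0U1, Set.mem_iInter.mpr hx0Vk⟩
    have hV2U1 : V2 ⊆ U1 := Set.inter_subset_left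
    have hV2Vk : ∀ k, V2 ⊆ Vk k := fun k x hx => Set.mem_iInter.mp hx.2 k
    have hlamcontV2 : ∀ k, ContinuousOn (lam k) V2 := fun k =>
      ((hlamsm k).mono (hV2Vk k)).continuousOn
    -- pairwise distinctness neighborhood
    set Dp : Fin n × Fin n → Set (Fin d → ℝ) := fun q =>
      if q.1 = q.2 then Set.univ
      else V2 ∩ (fun x => lam q.1 x - lam q.2 x) ⁻¹' {(0:ℂ)}ᶜ with hDp
    have hDpopen : ∀ q, IsOpen (Dp q) := by
      intro q
      by_cases hq : q.1 = q.2
      · simp only [hDp, if_pos hq]; exact isOpen_univ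
      · simp only [hDp, if_neg hq]
        exact ContinuousOn.isOpen_inter_preimage
          ((hlamcontV2 q.1).sub (hlamcontV2 q.2)) hV2open (isOpen_compl_singleton)
    have hx0Dp : ∀ q, x0 ∈ Dp q := by
      intro q
      by_cases hq : q.1 = q.2
      · simp only [hDp, if_pos hq]; trivial
      · simp only [hDp, if_neg hq]
        refine ⟨hx0V2, ?_⟩
        simp only [Set.mem_preimage, Set.mem_compl_iff, Set.mem_singleton_iff]
        rw [hlamx0, hlamx0]
        exact sub_ne_zero_of_ne (fun h => hq (kap_injective A x0 h))
    have hDpneq : ∀ (q : Fin n × Fin n), q.1 ≠ q.2 → ∀ x ∈ Dp q, lam q.1 x ≠ lam q.2 x := by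
      intro q hq x hx
      simp only [hDp, if_neg hq] at hx
      have := hx.2
      simp only [Set.mem_preimage, Set.mem_compl_iff, Set.mem_singleton_iff] at this
      exact sub_ne_zero.mp this
    set D := V2 ∩ ⋂ q : Fin n × Fin n, Dp q with hD
    have hDopen : IsOpen D := hV2open.inter (isOpen_iInter_of_finite hDpopen)
    have hx0D : x0 ∈ D := ⟨hx0V2, Set.mem_iInter.mpr hx0Dp⟩
    have hDV2 : D ⊆ V2 := Set.inter_subset_left
    have hDdist : ∀ x ∈ D, ∀ k k' : Fin n, k ≠ k' → lam k x ≠ lam k' x := by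
      intro x hx k k' hkk'
      exact hDpneq (k, k') hkk' x (Set.mem_iInter.mp hx.2 (k, k'))
    -- multiplicities at x0
    set bb : Fin n → ℕ := fun k => (A x0).charpoly.rootMultiplicity (kap A x0 k) with hbb
    -- Taylor coefficient nonvanishing neighborhoods
    have hDU : D ⊆ U := fun x hx => hWU (hU1W (hV2U1 (hDV2 hx)))
    set Tk : Fin n → Set (Fin d → ℝ) := fun k => D ∩
      (fun x => ((Polynomial.hasseDeriv (bb k) ((A x).charpoly))).eval (lam k x)) ⁻¹' {(0:ℂ)}ᶜ
      with hTk
    have hTkopen : ∀ k, IsOpen (Tk k) := by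
      intro k
      refine ContinuousOn.isOpen_inter_preimage ?_ hDopen (isOpen_compl_singleton)
      exact (contDiffOn_hasse_eval hA hDU ((hlamsm k).mono (fun x hx => hV2Vk k (hDV2 hx)))
        (bb k)).continuousOn
    have hx0Tk : ∀ k, x0 ∈ Tk k := by
      intro k
      refine ⟨hx0D, ?_⟩
      simp only [Set.mem_preimage, Set.mem_compl_iff, Set.mem_singleton_iff]
      rw [hlamx0]
      exact hasse_rootMultiplicity_ne_zero ((Matrix.charpoly_monic (A x0)).ne_zero) _
    set V3 := D ∩ ⋂ k : Fin n, Tk k with hV3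
    have hV3open : IsOpen V3 := hDopen.inter (isOpen_iInter_of_finite hTkopen)
    have hx0V3 : x0 ∈ V3 := ⟨hx0D, Set.mem_iInter.mpr hx0Tk⟩
    have hV3D : V3 ⊆ D := Set.inter_subset_left
    have hV3U1 : V3 ⊆ U1 := fun x hx => hV2U1 (hDV2 (hV3D hx))
    have hV3W : V3 ⊆ W := fun x hx => hU1W (hV3U1 hx)
    -- the eigenvalue structure is constant on V3
    have hinjx : ∀ x ∈ V3, Function.Injective (fun k : Fin n => lam k x) := by
      intro x hx k k' h
      by_contra hne
      exact hDdist x (hV3D hx) k k' hne h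
    have himg : ∀ x ∈ V3, (A x).charpoly.roots.toFinset
        = Finset.image (fun k : Fin n => lam k x) Finset.univ := by
      intro x hx
      have hsub : Finset.image (fun k : Fin n => lam k x) Finset.univ
          ⊆ (A x).charpoly.roots.toFinset := by
        refine Finset.image_subset_iff.mpr fun k _ => ?_
        refine mem_toFinset_of_eval_sqf_eq_zero A x ?_
        rw [← hGG x (hV3U1 hx)]
        exact hlamroot k x (hV2Vk k (hDV2 (hV3D hx)))
      have hcard1 : ((A x).charpoly.roots.toFinset).card = n := hnnU1 x (hV3U1 hx)
      have hcard2 : (Finset.image (fun k : Fin n => lam k x) Finset.univ).card = n := by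
        rw [Finset.card_image_of_injective _ (hinjx x hx), Finset.card_univ, Fintype.card_fin]
      exact (Finset.eq_of_subset_of_card_le hsub (by omega)).symm
    have hmultle : ∀ x ∈ V3, ∀ k : Fin n,
        (A x).charpoly.rootMultiplicity (lam k x) ≤ bb k := by
      intro x hx k
      have hxTk := Set.mem_iInter.mp hx.2 k
      have hne : ((Polynomial.hasseDeriv (bb k) ((A x).charpoly))).eval (lam k x) ≠ 0 := by
        have := hxTk.2
        simpa only [Set.mem_preimage, Set.mem_compl_iff, Set.mem_singleton_iff] using this
      exact rootMultiplicity_le_of_hasse_ne_zero hne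
    have hsumx : ∀ x ∈ V3, ∑ k : Fin n, (A x).charpoly.rootMultiplicity (lam k x) = m :=
      fun x hx => sum_rootMultiplicity A x _ (hinjx x hx) (himg x hx)
    have hbbsum : ∑ k : Fin n, bb k = m := by
      have h := hsumx x0 hx0V3
      rw [← h]
      refine Finset.sum_congr rfl fun k _ => ?_
      rw [hbb, hlamx0]
    have hmulteq : ∀ x ∈ V3, ∀ k : Fin n,
        (A x).charpoly.rootMultiplicity (lam k x) = bb k := by
      intro x hx
      have hle : ∀ k ∈ Finset.univ, (A x).charpoly.rootMultiplicity (lam k x) ≤ bb k :=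
        fun k _ => hmultle x hx k
      have hsums : ∑ k : Fin n, (A x).charpoly.rootMultiplicity (lam k x) = ∑ k : Fin n, bb k := by
        rw [hsumx x hx, hbbsum]
      have := (Finset.sum_eq_sum_iff_of_le hle).mp hsums
      exact fun k => this k (Finset.mem_univ k)
    have hcp : ∀ x ∈ V3, (A x).charpoly
        = ∏ k : Fin n, (X - C (lam k x)) ^ (bb k) := by
      intro x hx
      rw [charpoly_prod_form A x _ (hinjx x hx) (himg x hx)]
      exact Finset.prod_congr rfl fun k _ => by rw [hmulteq x hx k]
    -- rank stage
    set MP : Fin n × Fin m → (Fin d → ℝ) → Matrix (Fin m) (Fin m) ℂ :=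
      fun q x => (A x - lam q.1 x • (1 : Matrix (Fin m) (Fin m) ℂ)) ^ ((q.2 : ℕ)+1) with hMP
    have hMPcont : ∀ q, ∀ i j, ContinuousOn (fun y => MP q y i j) V3 := by
      intro q
      refine continuousOn_matrix_pow _ (fun i j => ?_)
      have e : (fun y => (A y - lam q.1 y • (1 : Matrix (Fin m) (Fin m) ℂ)) i j)
          = fun y => A y i j - lam q.1 y * (1 : Matrix (Fin m) (Fin m) ℂ) i j := by
        funext y
        simp [Matrix.sub_apply, Matrix.smul_apply, smul_eq_mul]
      rw [e]
      exact (((hA i j).continuousOn).mono (fun x hx => hDU (hV3D hx))).sub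
        (((hlamcontV2 q.1).mono (fun x hx => hDV2 (hV3D hx))).mul continuousOn_const)
    set R : (Fin d → ℝ) → ℕ := fun x => ∑ q : Fin n × Fin m, (MP q x).rank with hR
    obtain ⟨x1, hx1V3, hx1max⟩ := exists_max_nat_on ⟨x0, hx0V3⟩ R (n * m * m) (fun x _ => by
      have hle : ∀ q : Fin n × Fin m, (MP q x).rank ≤ m := by
        intro q
        have := Matrix.rank_le_card_height (MP q x)
        simpa using this
      calc R x ≤ ∑ _q : Fin n × Fin m, m := Finset.sum_le_sum fun q _ => hle q
      _ = n * m * m := by simp [Finset.sum_const, Finset.card_univ, mul_assoc])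
    have hTq : ∀ q : Fin n × Fin m, ∃ T, IsOpen T ∧ x1 ∈ T ∧ T ⊆ V3 ∧
        ∀ y ∈ T, (MP q x1).rank ≤ (MP q y).rank :=
      fun q => rank_lsc hV3open (hMPcont q) hx1V3
    choose Tq hTqopen hx1Tq hTqV3 hTqrank using hTq
    set Vf := V3 ∩ ⋂ q : Fin n × Fin m, Tq q with hVf
    have hVfopen : IsOpen Vf := hV3open.inter (isOpen_iInter_of_finite hTqopen)
    have hx1Vf : x1 ∈ Vf := ⟨hx1V3, Set.mem_iInter.mpr hx1Tq⟩
    have hVfV3 : Vf ⊆ V3 := Set.inter_subset_left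
    have hrkeq : ∀ y ∈ Vf, ∀ q : Fin n × Fin m, (MP q y).rank = (MP q x1).rank := by
      intro y hy
      have hge : ∀ q ∈ Finset.univ, (MP q x1).rank ≤ (MP q y).rank :=
        fun q _ => hTqrank q y (Set.mem_iInter.mp hy.2 q)
      have hRy : R y ≤ R x1 := hx1max y (hVfV3 hy)
      have hsums : ∑ q : Fin n × Fin m, (MP q x1).rank = ∑ q : Fin n × Fin m, (MP q y).rank :=
        le_antisymm (Finset.sum_le_sum hge) hRy
      have := (Finset.sum_eq_sum_iff_of_le hge).mp hsums
      exact fun q => (this q (Finset.mem_univ q)).symm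
    -- conclusion
    refine ⟨x1, (hV3W hx1V3).1, hWU (hV3W hx1V3), ?_⟩
    refine ⟨Vf, hVfopen, hx1Vf, fun x hx => hDU (hV3D (hVfV3 hx)), n, lam, bb,
      (fun k j => (MP (k, j) x1).rank), ?_, ?_, ?_, ?_⟩
    · intro k
      exact (hlamsm k).mono (fun x hx => hV2Vk k (hDV2 (hV3D (hVfV3 hx))))
    · intro x hx k k' hkk'
      exact hDdist x (hV3D (hVfV3 hx)) k k' hkk'
    · intro x hx
      exact hcp x (hVfV3 hx)
    · intro x hx k j
      exact hrkeq x hx (k, j)
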